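/- For every grid function ν : ZMod Nx × ZMod Ny → ℝ, (11/16)·‖ν‖ ≤ ‖L_x ν‖ ≤ ‖ν‖ and (11/16)·‖ν‖ ≤ ‖L_y ν‖ ≤ ‖ν‖; consequently the linear maps L_x and L_y on the space of grid functions are bijective. -/

import Mathlib

open Finset

/-- A periodic grid function on the `Nx × Ny` staggered grid (periodicity is
automatic in the `ZMod` indexing).  The same index set represents
cell-centered, x-face and y-face values. -/
abbrev GridFn (Nx Ny : ℕ) := ZMod Nx × ZMod Ny → ℝ

variable {Nx Ny : ℕ}

/-- Discrete `L²` inner product `(ω, σ) = ∑ᵢⱼ hx·hy·ωᵢⱼ·σᵢⱼ`. -/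
noncomputable def gip [NeZero Nx] [NeZero Ny] (hx hy : ℝ) (ω σ : GridFn Nx Ny) : ℝ :=
  ∑ p : ZMod Nx × ZMod Ny, hx * hy * ω p * σ p

/-- Discrete `L²` norm. -/
noncomputable def gnorm [NeZero Nx] [NeZero Ny] (hx hy : ℝ) (ω : GridFn Nx Ny) : ℝ :=
  Real.sqrt (gip hx hy ω ω)

/-- `δ_x` mapping cell-centered functions to x-face functions. -/
noncomputable def dxc (hx : ℝ) (ω : GridFn Nx Ny) : GridFn Nx Ny :=
  fun p => (ω (p.1 + 1, p.2) - ω p) / hx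

/-- `δ_x` mapping x-face functions to cell-centered functions. -/
noncomputable def dxf (hx : ℝ) (ν : GridFn Nx Ny) : GridFn Nx Ny :=
  fun p => (ν p - ν (p.1 - 1, p.2)) / hx

/-- `δ_y` mapping cell-centered functions to y-face functions. -/
noncomputable def dyc (hy : ℝ) (ω : GridFn Nx Ny) : GridFn Nx Ny :=
  fun p => (ω (p.1, p.2 + 1) - ω p) / hy

/-- `δ_y` mapping y-face functions to cell-centered functions. -/
noncomputable def dyf (hy : ℝ) (ν : GridFn Nx Ny) : GridFn Nx Ny :=
  fun p => (ν p - ν (p.1, p.2 - 1)) / hy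

/-- Second difference `δ_x²`. -/
noncomputable def dxx (hx : ℝ) (ω : GridFn Nx Ny) : GridFn Nx Ny :=
  fun p => (ω (p.1 + 1, p.2) - 2 * ω p + ω (p.1 - 1, p.2)) / hx ^ 2

/-- Second difference `δ_y²`. -/
noncomputable def dyy (hy : ℝ) (ω : GridFn Nx Ny) : GridFn Nx Ny :=
  fun p => (ω (p.1, p.2 + 1) - 2 * ω p + ω (p.1, p.2 - 1)) / hy ^ 2

/-- Compact operator `L_x = Id + (hx²/24)·δ_x²`. -/
noncomputable def opLx (hx : ℝ) (ω : GridFn Nx Ny) : GridFn Nx Ny :=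
  fun p => ω p + hx ^ 2 / 24 * dxx hx ω p

/-- Compact operator `L_y = Id + (hy²/24)·δ_y²`. -/
noncomputable def opLy (hy : ℝ) (ω : GridFn Nx Ny) : GridFn Nx Ny :=
  fun p => ω p + hy ^ 2 / 24 * dyy hy ω p

/-- Compact operator `ℒ = L_x ∘ L_y`. -/
noncomputable def opLL (hx hy : ℝ) (ω : GridFn Nx Ny) : GridFn Nx Ny :=
  opLx hx (opLy hy ω)

/-- Cubic interpolation operator `T_x` (cell-centered to x-face). -/
noncomputable def Tx (ω : GridFn Nx Ny) : GridFn Nx Ny :=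
  fun p => (-ω (p.1 - 1, p.2) + 9 * ω p + 9 * ω (p.1 + 1, p.2) - ω (p.1 + 2, p.2)) / 16

/-- Cubic interpolation operator `T_y` (cell-centered to y-face). -/
noncomputable def Ty (ω : GridFn Nx Ny) : GridFn Nx Ny :=
  fun p => (-ω (p.1, p.2 - 1) + 9 * ω p + 9 * ω (p.1, p.2 + 1) - ω (p.1, p.2 + 2)) / 16


section Aux
variable {Nx Ny : ℕ} [NeZero Nx] [NeZero Ny]

/-- View a grid function as a Euclidean-space vector. -/
noncomputable def toE (ω : GridFn Nx Ny) : EuclideanSpace ℝ (ZMod Nx × ZMod Ny) := WithLp.toLp 2 ω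

lemma gnorm_eq (hx hy : ℝ) (hhx : 0 < hx) (hhy : 0 < hy) (ω : GridFn Nx Ny) :
    gnorm hx hy ω = Real.sqrt (hx * hy) * ‖toE ω‖ := by
  have h0 : (0:ℝ) ≤ hx * hy := le_of_lt (mul_pos hhx hhy)
  rw [gnorm, gip, EuclideanSpace.norm_eq, ← Real.sqrt_mul h0, Finset.mul_sum]
  congr 1
  refine Finset.sum_congr rfl fun p _ => ?_
  rw [Real.norm_eq_abs, sq_abs]
  unfold toE; rw [PiLp.toLp_apply]; ring

lemma norm_toE_comp (f : GridFn Nx Ny) (e : (ZMod Nx × ZMod Ny) ≃ (ZMod Nx × ZMod Ny)) :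
    ‖toE (fun p => f (e p))‖ = ‖toE f‖ := by
  rw [EuclideanSpace.norm_eq, EuclideanSpace.norm_eq]
  congr 1
  exact Equiv.sum_comp e (fun p => ‖f p‖ ^ 2)

lemma norm_shift_x (f : GridFn Nx Ny) (k : ZMod Nx) :
    ‖toE (fun p : ZMod Nx × ZMod Ny => f (p.1 + k, p.2))‖ = ‖toE f‖ :=
  norm_toE_comp f ((Equiv.addRight k).prodCongr (Equiv.refl _))

lemma norm_shift_y (f : GridFn Nx Ny) (k : ZMod Ny) :
    ‖toE (fun p : ZMod Nx × ZMod Ny => f (p.1, p.2 + k))‖ = ‖toE f‖ :=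
  norm_toE_comp f ((Equiv.refl _).prodCongr (Equiv.addRight k))

lemma toE_opLx (hx : ℝ) (hhx : hx ≠ 0) (ν : GridFn Nx Ny) :
    toE (opLx hx ν) = (22/24 : ℝ) • toE ν
      + ((1/24 : ℝ) • toE (fun p : ZMod Nx × ZMod Ny => ν (p.1 + 1, p.2))
      + (1/24 : ℝ) • toE (fun p : ZMod Nx × ZMod Ny => ν (p.1 + (-1), p.2))) := by
  ext p
  simp only [toE, opLx, dxx, PiLp.add_apply, PiLp.smul_apply, PiLp.toLp_apply, smul_eq_mul]
  have : p.1 + (-1) = p.1 - 1 := by ring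
  rw [this]
  field_simp
  ring

lemma toE_opLy (hy : ℝ) (hhy : hy ≠ 0) (ν : GridFn Nx Ny) :
    toE (opLy hy ν) = (22/24 : ℝ) • toE ν
      + ((1/24 : ℝ) • toE (fun p : ZMod Nx × ZMod Ny => ν (p.1, p.2 + 1))
      + (1/24 : ℝ) • toE (fun p : ZMod Nx × ZMod Ny => ν (p.1, p.2 + (-1)))) := by
  ext p
  simp only [toE, opLy, dyy, PiLp.add_apply, PiLp.smul_apply, PiLp.toLp_apply, smul_eq_mul]
  have : p.2 + (-1) = p.2 - 1 := by ring
  rw [this]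
  field_simp
  ring

lemma norm_opLx_le (hx : ℝ) (hhx : hx ≠ 0) (ν : GridFn Nx Ny) :
    ‖toE (opLx hx ν)‖ ≤ ‖toE ν‖ := by
  rw [toE_opLx hx hhx ν]
  calc ‖_‖ ≤ ‖(22/24 : ℝ) • toE ν‖
      + (‖(1/24 : ℝ) • toE (fun p : ZMod Nx × ZMod Ny => ν (p.1 + 1, p.2))‖
      + ‖(1/24 : ℝ) • toE (fun p : ZMod Nx × ZMod Ny => ν (p.1 + (-1), p.2))‖) :=
        (norm_add_le _ _).trans (by gcongr; exact norm_add_le _ _)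
    _ ≤ ‖toE ν‖ := by
        rw [norm_smul, norm_smul, norm_smul, norm_shift_x, norm_shift_x]
        have h : (0:ℝ) ≤ ‖toE ν‖ := norm_nonneg _
        simp only [Real.norm_eq_abs]
        rw [abs_of_pos (by norm_num), abs_of_pos (by norm_num)]
        nlinarith

lemma norm_opLx_ge (hx : ℝ) (hhx : hx ≠ 0) (ν : GridFn Nx Ny) :
    5/6 * ‖toE ν‖ ≤ ‖toE (opLx hx ν)‖ := by
  rw [toE_opLx hx hhx ν]
  have h1 : ‖(1/24 : ℝ) • toE (fun p : ZMod Nx × ZMod Ny => ν (p.1 + 1, p.2))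
      + (1/24 : ℝ) • toE (fun p : ZMod Nx × ZMod Ny => ν (p.1 + (-1), p.2))‖
      ≤ 2/24 * ‖toE ν‖ := by
    refine (norm_add_le _ _).trans ?_
    rw [norm_smul, norm_smul, norm_shift_x, norm_shift_x]
    simp only [Real.norm_eq_abs]
    rw [abs_of_pos (by norm_num)]
    linarith [norm_nonneg (toE ν)]
  have h2 := norm_sub_norm_le ((22/24 : ℝ) • toE ν)
    (-((1/24 : ℝ) • toE (fun p : ZMod Nx × ZMod Ny => ν (p.1 + 1, p.2))
      + (1/24 : ℝ) • toE (fun p : ZMod Nx × ZMod Ny => ν (p.1 + (-1), p.2))))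
  rw [sub_neg_eq_add, norm_neg] at h2
  rw [norm_smul, Real.norm_eq_abs, abs_of_pos (by norm_num : (0:ℝ) < 22/24)] at h2
  linarith

lemma norm_opLy_le (hy : ℝ) (hhy : hy ≠ 0) (ν : GridFn Nx Ny) :
    ‖toE (opLy hy ν)‖ ≤ ‖toE ν‖ := by
  rw [toE_opLy hy hhy ν]
  calc ‖_‖ ≤ ‖(22/24 : ℝ) • toE ν‖
      + (‖(1/24 : ℝ) • toE (fun p : ZMod Nx × ZMod Ny => ν (p.1, p.2 + 1))‖
      + ‖(1/24 : ℝ) • toE (fun p : ZMod Nx × ZMod Ny => ν (p.1, p.2 + (-1)))‖) :=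
        (norm_add_le _ _).trans (by gcongr; exact norm_add_le _ _)
    _ ≤ ‖toE ν‖ := by
        rw [norm_smul, norm_smul, norm_smul, norm_shift_y, norm_shift_y]
        have h : (0:ℝ) ≤ ‖toE ν‖ := norm_nonneg _
        simp only [Real.norm_eq_abs]
        rw [abs_of_pos (by norm_num), abs_of_pos (by norm_num)]
        nlinarith

lemma norm_opLy_ge (hy : ℝ) (hhy : hy ≠ 0) (ν : GridFn Nx Ny) :
    5/6 * ‖toE ν‖ ≤ ‖toE (opLy hy ν)‖ := by
  rw [toE_opLy hy hhy ν]
  have h1 : ‖(1/24 : ℝ) • toE (fun p : ZMod Nx × ZMod Ny => ν (p.1, p.2 + 1))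
      + (1/24 : ℝ) • toE (fun p : ZMod Nx × ZMod Ny => ν (p.1, p.2 + (-1)))‖
      ≤ 2/24 * ‖toE ν‖ := by
    refine (norm_add_le _ _).trans ?_
    rw [norm_smul, norm_smul, norm_shift_y, norm_shift_y]
    simp only [Real.norm_eq_abs]
    rw [abs_of_pos (by norm_num)]
    linarith [norm_nonneg (toE ν)]
  have h2 := norm_sub_norm_le ((22/24 : ℝ) • toE ν)
    (-((1/24 : ℝ) • toE (fun p : ZMod Nx × ZMod Ny => ν (p.1, p.2 + 1))
      + (1/24 : ℝ) • toE (fun p : ZMod Nx × ZMod Ny => ν (p.1, p.2 + (-1)))))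
  rw [sub_neg_eq_add, norm_neg] at h2
  rw [norm_smul, Real.norm_eq_abs, abs_of_pos (by norm_num : (0:ℝ) < 22/24)] at h2
  linarith

/-- `opLx` as a linear map. -/
noncomputable def opLxL (hx : ℝ) : GridFn Nx Ny →ₗ[ℝ] GridFn Nx Ny where
  toFun := opLx hx
  map_add' ω σ := by funext p; simp only [opLx, dxx, Pi.add_apply]; ring
  map_smul' c ω := by
    funext p
    simp only [opLx, dxx, Pi.smul_apply, RingHom.id_apply, smul_eq_mul]
    ring

/-- `opLy` as a linear map. -/
noncomputable def opLyL (hy : ℝ) : GridFn Nx Ny →ₗ[ℝ] GridFn Nx Ny where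
  toFun := opLy hy
  map_add' ω σ := by funext p; simp only [opLy, dyy, Pi.add_apply]; ring
  map_smul' c ω := by
    funext p
    simp only [opLy, dyy, Pi.smul_apply, RingHom.id_apply, smul_eq_mul]
    ring

end Aux

/-- **Lemma 3.3 (bounds for the compact operators `L_x`, `L_y`).**
`(11/16)·‖ν‖ ≤ ‖L_x ν‖ ≤ ‖ν‖` and `(11/16)·‖ν‖ ≤ ‖L_y ν‖ ≤ ‖ν‖` for every grid
function `ν`; consequently `L_x` and `L_y` are bijective. -/
theorem compact_op_bounds [NeZero Nx] [NeZero Ny]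
    (hx hy : ℝ) (hhx : 0 < hx) (hhy : 0 < hy) :
    (∀ ν : GridFn Nx Ny,
      11 / 16 * gnorm hx hy ν ≤ gnorm hx hy (opLx hx ν) ∧
      gnorm hx hy (opLx hx ν) ≤ gnorm hx hy ν ∧
      11 / 16 * gnorm hx hy ν ≤ gnorm hx hy (opLy hy ν) ∧
      gnorm hx hy (opLy hy ν) ≤ gnorm hx hy ν) ∧
    Function.Bijective (opLx hx : GridFn Nx Ny → GridFn Nx Ny) ∧
    Function.Bijective (opLy hy : GridFn Nx Ny → GridFn Nx Ny) := by
  have hxne : hx ≠ 0 := ne_of_gt hhx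
  have hyne : hy ≠ 0 := ne_of_gt hhy
  have hs : (0:ℝ) ≤ Real.sqrt (hx * hy) := Real.sqrt_nonneg _
  have injx : Function.Injective (opLxL hx : GridFn Nx Ny →ₗ[ℝ] GridFn Nx Ny) := by
    rw [injective_iff_map_eq_zero]
    intro ν h
    have h2 : toE (opLx hx ν) = 0 := by
      have : opLx hx ν = 0 := h
      rw [this]; rfl
    have := norm_opLx_ge hx hxne ν
    rw [h2, norm_zero] at this
    have h3 : ‖toE ν‖ = 0 := le_antisymm (by linarith) (norm_nonneg _)
    have h4 : toE ν = 0 := norm_eq_zero.mp h3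
    exact congrArg WithLp.ofLp h4
  have injy : Function.Injective (opLyL hy : GridFn Nx Ny →ₗ[ℝ] GridFn Nx Ny) := by
    rw [injective_iff_map_eq_zero]
    intro ν h
    have h2 : toE (opLy hy ν) = 0 := by
      have : opLy hy ν = 0 := h
      rw [this]; rfl
    have := norm_opLy_ge hy hyne ν
    rw [h2, norm_zero] at this
    have h3 : ‖toE ν‖ = 0 := le_antisymm (by linarith) (norm_nonneg _)
    have h4 : toE ν = 0 := norm_eq_zero.mp h3
    exact congrArg WithLp.ofLp h4
  refine ⟨fun ν => ?_, ⟨injx, ?_⟩, ⟨injy, ?_⟩⟩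
  · rw [gnorm_eq hx hy hhx hhy ν, gnorm_eq hx hy hhx hhy (opLx hx ν),
      gnorm_eq hx hy hhx hhy (opLy hy ν)]
    have lx := norm_opLx_ge hx hxne ν
    have ux := norm_opLx_le hx hxne ν
    have ly := norm_opLy_ge hy hyne ν
    have uy := norm_opLy_le hy hyne ν
    have hn : (0:ℝ) ≤ ‖toE ν‖ := norm_nonneg _
    refine ⟨?_, ?_, ?_, ?_⟩ <;> nlinarith
  · exact LinearMap.injective_iff_surjective.mp injx
  · exact LinearMap.injective_iff_surjective.mp injy
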